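/- Let X be a normal space in which every one-point subset is Gδ. Then every countable subset A of X is a cozero set in B₁(X), i.e., X \ A = Z(f) for some f ∈ B₁(X). -/

import Mathlib

open Filter Topology

def IsBaireOne {X : Type*} [TopologicalSpace X] (f : X → ℝ) : Prop :=
  ∃ F : ℕ → X → ℝ, (∀ n, Continuous (F n)) ∧
    ∀ x, Filter.Tendsto (fun n => F n x) Filter.atTop (nhds (f x))

def B1 (X : Type*) [TopologicalSpace X] : Subring (X → ℝ) where
  carrier := {f | IsBaireOne f}
  zero_mem' := ⟨fun _ _ => 0, fun _ => continuous_const, fun _ => tendsto_const_nhds⟩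
  one_mem' := ⟨fun _ _ => 1, fun _ => continuous_const, fun _ => tendsto_const_nhds⟩
  add_mem' := by
    rintro f g ⟨F, hF, hFf⟩ ⟨G, hG, hGg⟩
    exact ⟨fun n => F n + G n, fun n => (hF n).add (hG n), fun x => (hFf x).add (hGg x)⟩
  mul_mem' := by
    rintro f g ⟨F, hF, hFf⟩ ⟨G, hG, hGg⟩
    exact ⟨fun n => F n * G n, fun n => (hF n).mul (hG n), fun x => (hFf x).mul (hGg x)⟩
  neg_mem' := by
    rintro f ⟨F, hF, hFf⟩
    exact ⟨fun n => -F n, fun n => (hF n).neg, fun x => (hFf x).neg⟩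

def zset {X : Type*} [TopologicalSpace X] (f : ↥(B1 X)) : Set X := {x | (f : X → ℝ) x = 0}

noncomputable def chi {X : Type*} (p : X) : X → ℝ := Set.indicator {p} (fun _ => 1)

set_option maxHeartbeats 1000000 in
/-- In a normal T1 space, a Gδ singleton is a zero set of a continuous [0,1]-valued function. -/
lemma exists_cont_zero_singleton {X : Type*} [TopologicalSpace X] [T1Space X] [NormalSpace X]
    (p : X) (hp : IsGδ ({p} : Set X)) :
    ∃ g : X → ℝ, Continuous g ∧ (∀ x, g x ∈ Set.Icc (0:ℝ) 1) ∧ ∀ x, g x = 0 ↔ x = p := by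
  obtain ⟨U, U_open, hU⟩ := hp.eq_iInter_nat
  have hpU : ∀ n, p ∈ U n := fun n => by
    have : p ∈ ⋂ n, U n := hU ▸ Set.mem_singleton p
    exact Set.mem_iInter.mp this n
  have h : ∀ n : ℕ, ∃ h : C(X, ℝ), Set.EqOn h 0 {p} ∧ Set.EqOn h 1 (U n)ᶜ ∧
      ∀ x, h x ∈ Set.Icc (0:ℝ) 1 := by
    intro n
    refine exists_continuous_zero_one_of_isClosed isClosed_singleton
      (U_open n).isClosed_compl ?_
    simp [Set.disjoint_left, hpU n]
  choose h h0 h1 h01 using h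
  set w : ℕ → ℝ := fun n => 1 / 2 / 2 ^ n with hw
  have hwpos : ∀ n, 0 < w n := fun n => by positivity
  have hwsum : Summable w := summable_geometric_two' 1
  have hbound : ∀ n x, ‖w n * h n x‖ ≤ w n := by
    intro n x
    rw [Real.norm_eq_abs, abs_mul, abs_of_pos (hwpos n),
      abs_of_nonneg (h01 n x).1]
    exact mul_le_of_le_one_right (hwpos n).le (h01 n x).2
  refine ⟨fun x => ∑' n, w n * h n x,
    continuous_tsum (fun n => continuous_const.mul (h n).continuous) hwsum hbound, ?_, ?_⟩
  · intro x
    constructor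
    · exact tsum_nonneg fun n => mul_nonneg (hwpos n).le (h01 n x).1
    · calc ∑' n, w n * h n x ≤ ∑' n, w n := by
            refine Summable.tsum_le_tsum (fun n => ?_) (hwsum.of_norm_bounded (fun i => hbound i x)) hwsum
            exact mul_le_of_le_one_right (hwpos n).le (h01 n x).2
        _ = 1 := tsum_geometric_two' 1
  · intro x
    constructor
    · intro hgx
      by_contra hne
      have hx : x ∉ ⋂ n, U n := by
        rw [← hU]; simpa using hne
      simp only [Set.mem_iInter, not_forall] at hx
      obtain ⟨n, hn⟩ := hx
      have hvn : w n * h n x = w n := by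
        rw [h1 n hn]; simp
      have hle : w n ≤ ∑' m, w m * h m x := by
        have := Summable.le_tsum (f := fun m => w m * h m x) (hwsum.of_norm_bounded (fun i => hbound i x)) n
          (fun j _ => mul_nonneg (hwpos j).le (h01 j x).1)
        simpa only [hvn] using this
      have hgx' : ∑' m, w m * h m x = 0 := hgx
      rw [hgx'] at hle
      linarith [hwpos n]
    · rintro rfl
      have : ∀ n, w n * h n x = 0 := fun n => by rw [h0 n rfl]; simp
      simp [this]

def IsFsigma {X : Type*} [TopologicalSpace X] (s : Set X) : Prop :=
  ∃ c : ℕ → Set X, (∀ n, IsClosed (c n)) ∧ s = ⋃ n, c n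

theorem stmt_11 {X : Type*} [TopologicalSpace X] [T1Space X] [NormalSpace X]
    (hG : ∀ p : X, IsGδ ({p} : Set X)) (A : Set X) (hA : A.Countable) :
    ∃ f : ↥(B1 X), zset f = Aᶜ := by
  classical
  rcases A.eq_empty_or_nonempty with rfl | hne
  · exact ⟨0, by simp [zset]⟩
  obtain ⟨u, rfl⟩ := hA.exists_eq_range hne
  choose g hgc hg01 hg0 using fun k => exists_cont_zero_singleton (u k) (hG (u k))
  -- the limit function
  set L : ℕ → X → ℝ := fun k x => if x = u k then (1/2)^k else 0 with hL
  have hLnn : ∀ k x, 0 ≤ L k x := by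
    intro k x; simp only [hL]; split <;> positivity
  have hLbd : ∀ k x, ‖L k x‖ ≤ (1/2:ℝ)^k := by
    intro k x
    rw [Real.norm_eq_abs, abs_of_nonneg (hLnn k x)]
    simp only [hL]; split
    · exact le_refl _
    · positivity
  have hgeo : Summable (fun k : ℕ => (1/2:ℝ)^k) :=
    summable_geometric_of_lt_one (by norm_num) (by norm_num)
  have hLsum : ∀ x, Summable (fun k => L k x) := fun x =>
    hgeo.of_norm_bounded (hLbd · x)
  set f : X → ℝ := fun x => ∑' k, L k x with hf
  -- the approximating sequence
  set F : ℕ → X → ℝ := fun n x => ∑ k ∈ Finset.range n, (1/2:ℝ)^k * (1 - g k x)^n with hF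
  have hFc : ∀ n, Continuous (F n) := by
    intro n
    exact continuous_finset_sum _ fun k _ =>
      continuous_const.mul ((continuous_const.sub (hgc k)).pow n)
  have hmem : f ∈ B1 X := by
    refine ⟨F, hFc, fun x => ?_⟩
    set Af : ℕ → ℕ → ℝ := fun n k => if k < n then (1/2:ℝ)^k * (1 - g k x)^n else 0 with hAf
    have h1g : ∀ k, (0:ℝ) ≤ 1 - g k x ∧ 1 - g k x ≤ 1 := by
      intro k
      constructor
      · linarith [(hg01 k x).2]
      · linarith [(hg01 k x).1]
    have hFA : ∀ n, F n x = ∑' k, Af n k := by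
      intro n
      rw [tsum_eq_sum (s := Finset.range n) (fun b hb => by
        simp only [hAf]; rw [if_neg (by simpa using hb)])]
      exact (Finset.sum_congr rfl fun k hk => by
        simp only [hAf]; rw [if_pos (Finset.mem_range.mp hk)]).symm
    have key : Tendsto (fun n => ∑' k, Af n k) atTop (𝓝 (∑' k, L k x)) := by
      refine tendsto_tsum_of_dominated_convergence hgeo (fun k => ?_) ?_
      · by_cases hx : x = u k
        · have hg0x : g k x = 0 := (hg0 k x).mpr hx
          have hev : ∀ᶠ n in atTop, L k x = Af n k := by
            filter_upwards [eventually_ge_atTop (k+1)] with n hn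
            simp only [hAf, hL, if_pos (Nat.lt_of_succ_le hn), if_pos hx, hg0x,
              sub_zero, one_pow, mul_one]
          exact Tendsto.congr' hev tendsto_const_nhds
        · have hLk : L k x = 0 := by simp [hL, hx]
          have hgpos : 0 < g k x :=
            lt_of_le_of_ne (hg01 k x).1 (fun h => hx ((hg0 k x).mp h.symm))
          have ht1 : (1 - g k x) < 1 := by linarith
          have htend : Tendsto (fun n => (1/2:ℝ)^k * (1 - g k x)^n) atTop (𝓝 0) := by
            have := tendsto_pow_atTop_nhds_zero_of_lt_one (h1g k).1 ht1
            simpa using (tendsto_const_nhds (x := (1/2:ℝ)^k)).mul this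
          rw [hLk]
          refine squeeze_zero (fun n => ?_) (fun n => ?_) htend
          · simp only [hAf]; split
            · exact mul_nonneg (by positivity) (pow_nonneg (h1g k).1 _)
            · exact le_refl 0
          · simp only [hAf]; split
            · exact le_refl _
            · exact mul_nonneg (by positivity) (pow_nonneg (h1g k).1 _)
      · refine Filter.Eventually.of_forall fun n k => ?_
        simp only [hAf]
        split
        · rw [Real.norm_eq_abs, abs_of_nonneg
            (mul_nonneg (by positivity) (pow_nonneg (h1g k).1 _))]
          exact mul_le_of_le_one_right (by positivity)
            (pow_le_one₀ (h1g k).1 (h1g k).2)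
        · simpa using (by positivity : (0:ℝ) ≤ (1/2)^k)
    exact Tendsto.congr (fun n => (hFA n).symm) key
  refine ⟨⟨f, hmem⟩, ?_⟩
  ext x
  simp only [zset, Set.mem_setOf_eq, Set.mem_compl_iff, Set.mem_range]
  constructor
  · intro hfx ⟨k, hk⟩
    have hle : L k x ≤ f x := Summable.le_tsum (hLsum x) k (fun j _ => hLnn j x)
    have : L k x = (1/2:ℝ)^k := by simp only [hL]; rw [if_pos hk.symm]
    rw [this, hfx] at hle
    have : (0:ℝ) < (1/2:ℝ)^k := by positivity
    linarith
  · intro hx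
    have : ∀ k, L k x = 0 := by
      intro k
      simp only [hL]
      rw [if_neg (fun h => hx ⟨k, h.symm⟩)]
    simp only [hf]
    simp [this]
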